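/- arXiv:2602.21138 — 2 statements merged into one kernel-verified Lean document; each statement's English description precedes it below -/
import Mathlib

section
/- Path graph breakpoint: let G = P_{m+1} be the path graph on vertices 1,…,m+1 (edges (i,i+1)), m ≥ 2, with seed s = e_1 at endpoint 1 (so d_1 = d_{m+1} = 1 and d_i = 2 for 2 ≤ i ≤ m), α ∈ (0,1], and ρ₀ = (1−α)/(3+α). For any ρ with max(ρ₀, 0) < ρ < 1 (and also at ρ = ρ₀ when ρ₀ > 0), the unique minimizer x⋆ of F_ρ has support S⋆ = {1} with x_1⋆ = 2α(1−ρ)/(1+α). Moreover, the degree-normalized KKT slack at node 2 (where d_2 = 2 and λ_2 = αρ√2) equals γ_2 = (λ_2 − |∇_2 f(x⋆)|)/√2 = (α(3+α)/(2(1+α)))·(ρ − ρ₀); in particular at the breakpoint ρ = ρ₀ one has min_{i ∉ S⋆} γ_i = 0. -/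
open Finset

noncomputable section

/-- Degree of vertex `i` in the (unweighted) graph with adjacency matrix `A`. -/
def deg {n : ℕ} (A : Matrix (Fin n) (Fin n) ℝ) (i : Fin n) : ℝ := ∑ j, A i j

/-- The PageRank matrix `Q = αI + ((1−α)/2)·𝓛 = ((1+α)/2)·I − ((1−α)/2)·D^{-1/2} A D^{-1/2}`. -/
def Qmat {n : ℕ} (A : Matrix (Fin n) (Fin n) ℝ) (α : ℝ) : Matrix (Fin n) (Fin n) ℝ :=
  fun i j => (if i = j then (1 + α) / 2 else 0)
    - ((1 - α) / 2) * A i j / (Real.sqrt (deg A i) * Real.sqrt (deg A j))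

/-- Smooth PageRank objective `f(x) = (1/2)⟨x, Qx⟩ − α⟨D^{-1/2} e_v, x⟩` with seed vertex `v`. -/
def fPR {n : ℕ} (A : Matrix (Fin n) (Fin n) ℝ) (α : ℝ) (v : Fin n) (x : Fin n → ℝ) : ℝ :=
  (1 / 2) * (∑ i, x i * (Qmat A α).mulVec x i) - α * (x v / Real.sqrt (deg A v))

/-- Gradient of `fPR`: `∇f(x) = Qx − α·D^{-1/2} e_v`. -/
def gradf {n : ℕ} (A : Matrix (Fin n) (Fin n) ℝ) (α : ℝ) (v : Fin n) (x : Fin n → ℝ) :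
    Fin n → ℝ :=
  fun i => (Qmat A α).mulVec x i - α * (if i = v then 1 / Real.sqrt (deg A v) else 0)

/-- Weighted ℓ1 norm `‖D^{1/2} x‖₁ = ∑ i, √(d i)·|x i|`. -/
def l1w {n : ℕ} (A : Matrix (Fin n) (Fin n) ℝ) (x : Fin n → ℝ) : ℝ :=
  ∑ i, Real.sqrt (deg A i) * |x i|

/-- ℓ1-regularized PageRank objective `F_ρ(x) = f(x) + αρ‖D^{1/2}x‖₁`. -/
def Freg {n : ℕ} (A : Matrix (Fin n) (Fin n) ℝ) (α : ℝ) (v : Fin n) (ρ : ℝ)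
    (x : Fin n → ℝ) : ℝ :=
  fPR A α v x + α * ρ * l1w A x

/-- Coordinatewise soft-thresholding at levels `t·√(d i)`: this is the proximal map
`prox_{ηg}` of `g(x) = cαρ‖D^{1/2}x‖₁` with `t = η·c·α·ρ`. -/
def softT {n : ℕ} (A : Matrix (Fin n) (Fin n) ℝ) (t : ℝ) (w : Fin n → ℝ) : Fin n → ℝ :=
  fun i => Real.sign (w i) * max (|w i| - t * Real.sqrt (deg A i)) 0

/-- Euclidean norm on `Fin n → ℝ`. -/
def enorm {n : ℕ} (x : Fin n → ℝ) : ℝ := Real.sqrt (∑ i, (x i) ^ 2)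

open Classical in
/-- Degree-weighted volume of a vertex set: `vol(S) = ∑_{i ∈ S} d i`. -/
def volS {n : ℕ} (A : Matrix (Fin n) (Fin n) ℝ) (S : Set (Fin n)) : ℝ :=
  ∑ i ∈ Finset.univ.filter (fun i => i ∈ S), deg A i

/-- Neighbor set of a vertex. -/
def nbr {n : ℕ} (A : Matrix (Fin n) (Fin n) ℝ) (i : Fin n) : Set (Fin n) := {j | A i j ≠ 0}

/-- Vertex boundary of `S`: vertices outside `S` with a neighbor in `S`. -/
def bdry {n : ℕ} (A : Matrix (Fin n) (Fin n) ℝ) (S : Set (Fin n)) : Set (Fin n) :=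
  {j | j ∉ S ∧ ∃ i ∈ S, A j i ≠ 0}

/-- `A` is the adjacency matrix of a finite undirected unweighted loopless graph
with all degrees positive. -/
structure IsGraph {n : ℕ} (A : Matrix (Fin n) (Fin n) ℝ) : Prop where
  symm : ∀ i j, A i j = A j i
  zero_one : ∀ i j, A i j = 0 ∨ A i j = 1
  loopless : ∀ i, A i i = 0
  deg_pos : ∀ i, 0 < deg A i

/-- Adjacency matrix of the path graph on `m+1` vertices `0,1,…,m` (edges between
consecutive vertices). Vertex `0` here is the paper's endpoint vertex `1`. -/
def pathA (m : ℕ) : Matrix (Fin (m + 1)) (Fin (m + 1)) ℝ :=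
  fun i j => if i.val + 1 = j.val ∨ j.val + 1 = i.val then 1 else 0

-- ======== auxiliary lemmas ========


lemma PGB.mulVec_eq {n : ℕ} (M : Matrix (Fin n) (Fin n) ℝ) (v : Fin n → ℝ) (i : Fin n) :
    M.mulVec v i = ∑ j, M i j * v j := rfl

lemma PGB.fin1val (m : ℕ) (hm : 2 ≤ m) : ((1 : Fin (m+1)) : ℕ) = 1 := by
  simp [Fin.val_one']; omega

lemma PGB.deg_path0 (m : ℕ) (hm : 2 ≤ m) : deg (pathA m) 0 = 1 := by
  unfold deg pathA
  have h : ∀ j : Fin (m+1), ((0:Fin (m+1)).val + 1 = j.val ∨ j.val + 1 = (0:Fin (m+1)).val) ↔ j = ⟨1, by omega⟩ := by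
    intro j; rw [Fin.ext_iff]; simp; omega
  simp only [h]
  simp

lemma PGB.deg_path1 (m : ℕ) (hm : 2 ≤ m) : deg (pathA m) 1 = 2 := by
  unfold deg pathA
  have h1 : ((1 : Fin (m+1)) : ℕ) = 1 := PGB.fin1val m hm
  simp only [h1]
  have h : ∀ j : Fin (m+1), (ite ((1:ℕ) + 1 = j.val ∨ j.val + 1 = 1) (1:ℝ) 0)
      = (if j = ⟨0, by omega⟩ then 1 else 0) + (if j = ⟨2, by omega⟩ then 1 else 0) := by
    intro j
    rcases Decidable.eq_or_ne j ⟨0, by omega⟩ with h0 | h0 <;> rcases Decidable.eq_or_ne j ⟨2, by omega⟩ with h2 | h2 <;>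
      (simp only [Fin.ext_iff, ne_eq, Fin.val_mk] at h0 h2 ⊢; split_ifs <;> (try omega) <;> norm_num)
  simp only [h]
  rw [Finset.sum_add_distrib]
  rw [Finset.sum_ite_eq', Finset.sum_ite_eq']; simp; norm_num

lemma PGB.deg_path_pos (m : ℕ) (hm : 2 ≤ m) : ∀ i, 0 < deg (pathA m) i := by
  intro i
  unfold deg pathA
  rcases Decidable.eq_or_ne i.val 0 with h0 | h0
  · have := Finset.single_le_sum (f := fun j => if i.val + 1 = j.val ∨ j.val + 1 = i.val then (1:ℝ) else 0)
      (fun j _ => by positivity) (Finset.mem_univ (⟨1, by omega⟩ : Fin (m+1)))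
    have h1 : (i.val + 1 = (⟨1, by omega⟩ : Fin (m+1)).val ∨ (⟨1, by omega⟩ : Fin (m+1)).val + 1 = i.val) := by
      simp [h0]
    simp only [if_pos h1] at this
    linarith
  · have hlt : i.val - 1 < m + 1 := by omega
    have := Finset.single_le_sum (f := fun j => if i.val + 1 = j.val ∨ j.val + 1 = i.val then (1:ℝ) else 0)
      (fun j _ => by positivity) (Finset.mem_univ (⟨i.val - 1, hlt⟩ : Fin (m+1)))
    have h1 : (i.val + 1 = (⟨i.val - 1, hlt⟩ : Fin (m+1)).val ∨ (⟨i.val - 1, hlt⟩ : Fin (m+1)).val + 1 = i.val) := by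
      simp; omega
    simp only [if_pos h1] at this
    linarith

lemma PGB.Qmat_symm {n : ℕ} (A : Matrix (Fin n) (Fin n) ℝ) (hs : ∀ i j, A i j = A j i)
    (α : ℝ) (i j : Fin n) : Qmat A α i j = Qmat A α j i := by
  unfold Qmat
  rw [hs i j, mul_comm (Real.sqrt (deg A i))]
  congr 1
  simp [eq_comm]

lemma PGB.quad_lb {n : ℕ} (A : Matrix (Fin n) (Fin n) ℝ) (hs : ∀ i j, A i j = A j i)
    (hnn : ∀ i j, 0 ≤ A i j) (hd : ∀ i, 0 < deg A i) (α : ℝ) (hα1 : α ≤ 1)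
    (u : Fin n → ℝ) :
    α * ∑ i, u i ^ 2 ≤ ∑ i, u i * (Qmat A α).mulVec u i := by
  set a : Fin n → ℝ := fun i => u i / Real.sqrt (deg A i) with ha
  have hsq : ∀ i, Real.sqrt (deg A i) * Real.sqrt (deg A i) = deg A i := fun i =>
    Real.mul_self_sqrt (hd i).le
  have hspos : ∀ i, 0 < Real.sqrt (deg A i) := fun i => Real.sqrt_pos.2 (hd i)
  have key : ∑ i, u i * (Qmat A α).mulVec u i
      = (1 + α) / 2 * ∑ i, u i ^ 2 - (1 - α) / 2 * ∑ i, ∑ j, A i j * (a i * a j) := by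
    rw [Finset.mul_sum, Finset.mul_sum, ← Finset.sum_sub_distrib]
    refine Finset.sum_congr rfl fun i _ => ?_
    rw [PGB.mulVec_eq, Finset.mul_sum, Finset.mul_sum]
    have hterm : ∀ j, u i * (Qmat A α i j * u j)
        = (if j = i then (1 + α) / 2 * u i ^ 2 else 0)
          - (1 - α) / 2 * (A i j * (a i * a j)) := by
      intro j
      unfold Qmat
      rcases Decidable.eq_or_ne i j with h | h
      · subst h
        rw [if_pos rfl, if_pos rfl, ha]
        field_simp
      · rw [if_neg h, if_neg (Ne.symm h), ha]
        field_simp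
        ring
    rw [Finset.sum_congr rfl (fun j _ => hterm j), Finset.sum_sub_distrib,
      Finset.sum_ite_eq' univ i (fun _ => (1 + α) / 2 * u i ^ 2), if_pos (Finset.mem_univ i)]
  have hdsq : ∀ i, a i ^ 2 * deg A i = u i ^ 2 := by
    intro i
    rw [ha]
    simp only []
    rw [div_pow, Real.sq_sqrt (hd i).le, div_mul_eq_mul_div, mul_div_assoc,
      div_self (hd i).ne', mul_one]
  have hS : ∑ i, ∑ j, A i j * (a i * a j) ≤ ∑ i, u i ^ 2 := by
    have step1 : ∑ i, ∑ j, A i j * (a i * a j)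
        ≤ ∑ i, ∑ j, A i j * ((a i ^ 2 + a j ^ 2) / 2) := by
      refine Finset.sum_le_sum fun i _ => Finset.sum_le_sum fun j _ => ?_
      exact mul_le_mul_of_nonneg_left (by nlinarith [sq_nonneg (a i - a j)]) (hnn i j)
    have step2 : ∑ i, ∑ j, A i j * ((a i ^ 2 + a j ^ 2) / 2) = ∑ i, u i ^ 2 := by
      have e1 : ∀ i j, A i j * ((a i ^ 2 + a j ^ 2) / 2)
          = A i j * a i ^ 2 / 2 + A i j * a j ^ 2 / 2 := fun i j => by ring
      simp only [e1, Finset.sum_add_distrib]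
      have e2 : ∑ i, ∑ j, A i j * a i ^ 2 / 2 = ∑ i, u i ^ 2 / 2 := by
        refine Finset.sum_congr rfl fun i _ => ?_
        rw [← hdsq i]
        unfold deg
        rw [Finset.mul_sum, Finset.sum_div]
        refine Finset.sum_congr rfl fun j _ => by ring
      have e3 : ∑ i, ∑ j, A i j * a j ^ 2 / 2 = ∑ i, u i ^ 2 / 2 := by
        rw [Finset.sum_comm]
        refine Finset.sum_congr rfl fun j _ => ?_
        rw [← hdsq j]
        unfold deg
        rw [Finset.mul_sum, Finset.sum_div]
        refine Finset.sum_congr rfl fun i _ => by rw [hs i j]; ring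
      rw [e2, e3, ← Finset.sum_add_distrib]
      exact Finset.sum_congr rfl fun i _ => by ring
    linarith
  have h1α : (0:ℝ) ≤ (1 - α) / 2 := by linarith
  have := mul_le_mul_of_nonneg_left hS h1α
  linarith [key]

lemma PGB.bilin_symm {n : ℕ} (M : Matrix (Fin n) (Fin n) ℝ)
    (hM : ∀ i j, M i j = M j i) (x z : Fin n → ℝ) :
    ∑ i, z i * M.mulVec x i = ∑ i, x i * M.mulVec z i := by
  simp only [PGB.mulVec_eq, Finset.mul_sum]
  rw [Finset.sum_comm]
  exact Finset.sum_congr rfl fun i _ => Finset.sum_congr rfl fun j _ => by rw [hM j i]; ring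

lemma PGB.quad_expand {n : ℕ} (M : Matrix (Fin n) (Fin n) ℝ)
    (hM : ∀ i j, M i j = M j i) (x z : Fin n → ℝ) :
    ∑ i, z i * M.mulVec z i
      = ∑ i, x i * M.mulVec x i + 2 * ∑ i, M.mulVec x i * (z i - x i)
        + ∑ i, (z i - x i) * M.mulVec (fun j => z j - x j) i := by
  have hsub : ∀ i, M.mulVec (fun j => z j - x j) i = M.mulVec z i - M.mulVec x i := by
    intro i
    simp only [PGB.mulVec_eq, mul_sub, Finset.sum_sub_distrib]
  have e1 : ∑ i, (z i - x i) * M.mulVec (fun j => z j - x j) i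
      = ∑ i, z i * M.mulVec z i - ∑ i, z i * M.mulVec x i
        - ∑ i, x i * M.mulVec z i + ∑ i, x i * M.mulVec x i := by
    simp only [hsub, sub_mul, mul_sub, Finset.sum_sub_distrib]
    ring
  have e2 : ∑ i, M.mulVec x i * (z i - x i)
      = ∑ i, z i * M.mulVec x i - ∑ i, x i * M.mulVec x i := by
    simp only [mul_sub, Finset.sum_sub_distrib]
    congr 1 <;> exact Finset.sum_congr rfl fun i _ => by ring
  have e3 := PGB.bilin_symm M hM x z
  rw [e1, e2]
  linarith


set_option maxHeartbeats 1000000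

/-- Path-graph breakpoint: for the path on `m+1 ≥ 3` vertices with seed at
endpoint `0` (paper's vertex 1), `α ∈ (0,1]`, `ρ₀ = (1−α)/(3+α)`, and `ρ` with
`max(ρ₀,0) < ρ < 1` or `ρ = ρ₀ > 0` (equivalently `0 < ρ`, `ρ₀ ≤ ρ < 1`), the unique
minimizer `x⋆` of `F_ρ` has support `{0}` with `x⋆_0 = 2α(1−ρ)/(1+α)`, and the
degree-normalized KKT slack at the second vertex (index `1`, degree `2`, `λ = αρ√2`) equals
`γ₂ = (αρ√2 − |∇_1 f(x⋆)|)/√2 = (α(3+α)/(2(1+α)))·(ρ − ρ₀)`; in particular at `ρ = ρ₀`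
this slack is `0`. -/
theorem path_graph_breakpoint
    (m : ℕ) (hm : 2 ≤ m)
    (α ρ ρ₀ : ℝ) (hα : 0 < α) (hα1 : α ≤ 1)
    (hρ₀ : ρ₀ = (1 - α) / (3 + α))
    (hρpos : 0 < ρ) (hρlb : ρ₀ ≤ ρ) (hρub : ρ < 1)
    (xs : Fin (m + 1) → ℝ)
    (hxs : ∀ z, Freg (pathA m) α 0 ρ xs ≤ Freg (pathA m) α 0 ρ z) :
    Function.support xs = {0} ∧
    xs 0 = 2 * α * (1 - ρ) / (1 + α) ∧
    (α * ρ * Real.sqrt 2 - |gradf (pathA m) α 0 xs 1|) / Real.sqrt 2 =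
      α * (3 + α) / (2 * (1 + α)) * (ρ - ρ₀) ∧
    (ρ = ρ₀ →
      (α * ρ * Real.sqrt 2 - |gradf (pathA m) α 0 xs 1|) / Real.sqrt 2 = 0) := by
  have hv1 : ((1 : Fin (m+1)) : ℕ) = 1 := PGB.fin1val m hm
  have hv0 : ((0 : Fin (m+1)) : ℕ) = 0 := rfl
  have h10 : (1 : Fin (m+1)) ≠ 0 := by
    rw [Fin.ne_iff_vne, hv1, hv0]; omega
  have hAsymm : ∀ i j, pathA m i j = pathA m j i := by
    intro i j; unfold pathA; exact if_congr or_comm rfl rfl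
  have hAnn : ∀ i j, (0:ℝ) ≤ pathA m i j := by
    intro i j; unfold pathA; split <;> norm_num
  have hd := PGB.deg_path_pos m hm
  have hd0 : deg (pathA m) 0 = 1 := PGB.deg_path0 m hm
  have hd1 : deg (pathA m) 1 = 2 := PGB.deg_path1 m hm
  set s : ℝ := Real.sqrt 2 with hsdef
  have hs2 : s ^ 2 = 2 := Real.sq_sqrt (by norm_num)
  have hspos : 0 < s := Real.sqrt_pos.2 (by norm_num)
  have h1α : (0:ℝ) < 1 + α := by linarith
  have h3α : (0:ℝ) < 3 + α := by linarith
  set c : ℝ := 2 * α * (1 - ρ) / (1 + α) with hcdef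
  have hcpos : 0 < c := by
    apply div_pos (by nlinarith) h1α
  set xh : Fin (m+1) → ℝ := fun i => if i = 0 then c else 0 with hxh
  -- adjacency entries in column 0
  have hA00 : pathA m 0 0 = 0 := by
    unfold pathA; rw [if_neg]; rw [hv0]; omega
  have hA10 : pathA m 1 0 = 1 := by
    unfold pathA; rw [if_pos]; rw [hv0, hv1]; omega
  have hAi0 : ∀ i : Fin (m+1), i ≠ 0 → i ≠ 1 → pathA m i 0 = 0 := by
    intro i hi0 hi1
    unfold pathA
    rw [if_neg]
    rw [hv0]
    rw [Fin.ne_iff_vne, hv0] at hi0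
    rw [Fin.ne_iff_vne, hv1] at hi1
    omega
  -- Q entries in column 0
  have hQ00 : Qmat (pathA m) α 0 0 = (1 + α) / 2 := by
    unfold Qmat; rw [hA00, if_pos rfl]; ring
  have hQ10 : Qmat (pathA m) α 1 0 = -((1 - α) / 2 / s) := by
    unfold Qmat
    rw [hA10, if_neg h10, hd1, hd0, Real.sqrt_one, mul_one, hsdef]
    ring
  have hQi0 : ∀ i : Fin (m+1), i ≠ 0 → i ≠ 1 → Qmat (pathA m) α i 0 = 0 := by
    intro i hi0 hi1
    unfold Qmat
    rw [hAi0 i hi0 hi1, if_neg hi0]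
    ring
  -- mulVec of xh
  have hmul : ∀ i, (Qmat (pathA m) α).mulVec xh i = Qmat (pathA m) α i 0 * c := by
    intro i
    rw [PGB.mulVec_eq]
    have : ∀ j, Qmat (pathA m) α i j * xh j
        = if j = (0 : Fin (m+1)) then Qmat (pathA m) α i j * c else 0 := by
      intro j; by_cases h : j = 0 <;> simp [hxh, h]
    rw [Finset.sum_congr rfl fun j _ => this j,
      Finset.sum_ite_eq' univ (0 : Fin (m+1)) (fun j => Qmat (pathA m) α i j * c),
      if_pos (Finset.mem_univ _)]
  -- gradient values at xh
  have hg0 : gradf (pathA m) α 0 xh 0 = -(α * ρ) := by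
    unfold gradf
    rw [hmul 0, hQ00, if_pos rfl, hd0, Real.sqrt_one, hcdef]
    field_simp
    ring
  have hg1 : gradf (pathA m) α 0 xh 1 = -((1 - α) / 2 / s) * c := by
    unfold gradf
    rw [hmul 1, hQ10, if_neg h10]
    ring
  have hgi : ∀ i : Fin (m+1), i ≠ 0 → i ≠ 1 → gradf (pathA m) α 0 xh i = 0 := by
    intro i hi0 hi1
    unfold gradf
    rw [hmul i, hQi0 i hi0 hi1, if_neg hi0]
    ring
  -- slack identity
  have hg1abs : |gradf (pathA m) α 0 xh 1| = (1 - α) / 2 / s * c := by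
    rw [hg1, abs_of_nonpos]
    · ring
    · have h1 : 0 ≤ (1 - α) / 2 / s :=
        div_nonneg (div_nonneg (by linarith) (by norm_num)) hspos.le
      nlinarith
  have hslack : (α * ρ * s - |gradf (pathA m) α 0 xh 1|) / s
      = α * (3 + α) / (2 * (1 + α)) * (ρ - ρ₀) := by
    rw [hg1abs, hcdef, hρ₀]
    field_simp
    linear_combination ((1-ρ)*(1-α)) * hs2
  -- KKT bound at vertex 1
  have hKKT : |gradf (pathA m) α 0 xh 1| ≤ α * ρ * s := by
    have hr : 0 ≤ α * (3 + α) / (2 * (1 + α)) * (ρ - ρ₀) := by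
      apply mul_nonneg (by positivity) (by linarith)
    rw [← hslack] at hr
    have h2 := mul_nonneg hr hspos.le
    rw [div_mul_cancel₀ _ hspos.ne'] at h2
    linarith
  -- expansion of Freg around xh
  have hexp : ∀ z : Fin (m+1) → ℝ, Freg (pathA m) α 0 ρ z
      = Freg (pathA m) α 0 ρ xh
        + ∑ i, (gradf (pathA m) α 0 xh i * (z i - xh i)
            + α * ρ * Real.sqrt (deg (pathA m) i) * (|z i| - |xh i|))
        + (1/2) * ∑ i, (z i - xh i) * (Qmat (pathA m) α).mulVec (fun j => z j - xh j) i := by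
    intro z
    have hq := PGB.quad_expand (Qmat (pathA m) α) (PGB.Qmat_symm (pathA m) hAsymm α) xh z
    have hgsum : ∑ i, gradf (pathA m) α 0 xh i * (z i - xh i)
        = ∑ i, (Qmat (pathA m) α).mulVec xh i * (z i - xh i)
          - α * ((z 0 - xh 0) / Real.sqrt (deg (pathA m) 0)) := by
      unfold gradf
      simp only [sub_mul, Finset.sum_sub_distrib]
      congr 1
      have : ∀ i : Fin (m+1), α * (if i = (0:Fin (m+1)) then 1 / Real.sqrt (deg (pathA m) 0) else 0) * (z i - xh i)
          = if i = (0:Fin (m+1)) then α * ((z i - xh i) / Real.sqrt (deg (pathA m) 0)) else 0 := by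
        intro i; split
        · field_simp
        · simp
      rw [Finset.sum_congr rfl fun i _ => this i,
        Finset.sum_ite_eq' univ (0 : Fin (m+1))
          (fun i => α * ((z i - xh i) / Real.sqrt (deg (pathA m) 0))),
        if_pos (Finset.mem_univ _)]
    have hl1 : ∑ i, α * ρ * Real.sqrt (deg (pathA m) i) * (|z i| - |xh i|)
        = α * ρ * l1w (pathA m) z - α * ρ * l1w (pathA m) xh := by
      unfold l1w
      rw [Finset.mul_sum, Finset.mul_sum, ← Finset.sum_sub_distrib]
      exact Finset.sum_congr rfl fun i _ => by ring
    rw [Finset.sum_add_distrib, hgsum, hl1]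
    unfold Freg fPR
    rw [hq]
    ring
  -- per-coordinate nonnegativity of the linear + l1 part
  have hT : ∀ (z : Fin (m+1) → ℝ) (i : Fin (m+1)),
      0 ≤ gradf (pathA m) α 0 xh i * (z i - xh i)
          + α * ρ * Real.sqrt (deg (pathA m) i) * (|z i| - |xh i|) := by
    intro z i
    have hαρ : 0 ≤ α * ρ := by positivity
    rcases Decidable.eq_or_ne i 0 with h0 | h0
    · subst h0
      rw [hg0, hd0, Real.sqrt_one]
      have hxh0 : xh 0 = c := by rw [hxh]; simp
      rw [hxh0, abs_of_pos hcpos]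
      have := le_abs_self (z 0)
      nlinarith
    rcases Decidable.eq_or_ne i 1 with h1 | h1
    · subst h1
      rw [hg1, hd1]
      have hxh1 : xh 1 = 0 := by rw [hxh]; simp [h10]
      rw [hxh1, abs_zero, sub_zero, sub_zero]
      have habs : |gradf (pathA m) α 0 xh 1 * z 1| = |gradf (pathA m) α 0 xh 1| * |z 1| :=
        abs_mul _ _
      have hneg : -(|gradf (pathA m) α 0 xh 1 * z 1|) ≤ gradf (pathA m) α 0 xh 1 * z 1 :=
        neg_abs_le _
      rw [hg1] at habs hneg
      have hz1 : 0 ≤ |z 1| := abs_nonneg _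
      have hK : |(-((1 - α) / 2 / s) * c)| ≤ α * ρ * s := by rw [← hg1]; exact hKKT
      have hseq : Real.sqrt 2 = s := rfl
      rw [hseq]
      nlinarith [mul_le_mul_of_nonneg_right hK hz1]
    · rw [hgi i h0 h1]
      have hxhi : xh i = 0 := by rw [hxh]; simp [h0]
      rw [hxhi, abs_zero, sub_zero, sub_zero, zero_mul, zero_add]
      have := Real.sqrt_nonneg (deg (pathA m) i)
      have := abs_nonneg (z i)
      positivity
  -- strong-convexity lower bound
  have hbound : ∀ z : Fin (m+1) → ℝ,
      Freg (pathA m) α 0 ρ xh + α / 2 * ∑ i, (z i - xh i) ^ 2 ≤ Freg (pathA m) α 0 ρ z := by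
    intro z
    rw [hexp z]
    have h1 : 0 ≤ ∑ i, (gradf (pathA m) α 0 xh i * (z i - xh i)
        + α * ρ * Real.sqrt (deg (pathA m) i) * (|z i| - |xh i|)) :=
      Finset.sum_nonneg fun i _ => hT z i
    have h2 : α * ∑ i, (z i - xh i) ^ 2
        ≤ ∑ i, (z i - xh i) * (Qmat (pathA m) α).mulVec (fun j => z j - xh j) i :=
      PGB.quad_lb (pathA m) hAsymm hAnn hd α hα1 (fun j => z j - xh j)
    linarith
  -- conclude xs = xh
  have hxeq : xs = xh := by
    have h0 := hxs xh
    have h1 := hbound xs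
    have hsum : ∑ i, (xs i - xh i) ^ 2 ≤ 0 := by nlinarith
    have hz : ∀ i ∈ (univ : Finset (Fin (m+1))), (xs i - xh i) ^ 2 = 0 := by
      rw [← Finset.sum_eq_zero_iff_of_nonneg fun i _ => sq_nonneg (xs i - xh i)]
      have : 0 ≤ ∑ i, (xs i - xh i) ^ 2 := Finset.sum_nonneg fun i _ => sq_nonneg _
      linarith
    funext i
    have := hz i (Finset.mem_univ i)
    have : xs i - xh i = 0 := by
      exact pow_eq_zero_iff (n := 2) (by norm_num) |>.mp this
    linarith
  refine ⟨?_, ?_, ?_, ?_⟩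
  · ext i
    simp only [Function.mem_support, hxeq, hxh, Set.mem_singleton_iff]
    constructor
    · intro h
      by_contra hne
      simp [hne] at h
    · intro h
      simp [h, hcpos.ne']
  · rw [hxeq, hxh]; simp
  · rw [hxeq]; exact hslack
  · intro h
    rw [hxeq, hslack, h]
    ring
end
end

section
/- Suppose coordinate i satisfies x_{A,i}⋆ = 0, i.e., it is inactive at the minimizer of problem (A). Then x_{B,i}⋆ = 0 as well, both gradients are nonpositive at coordinate i: ∇_i f(x_A⋆) ≤ 0 and ∇_i f(x_B⋆) ≤ 0, and |∇_i f(x_B⋆)| ≤ |∇_i f(x_A⋆)| ≤ αρ√d_i. -/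
open Finset

noncomputable section

lemma Qsymm {n : ℕ} {A : Matrix (Fin n) (Fin n) ℝ} (hG : IsGraph A) (α : ℝ) (i j : Fin n) :
    Qmat A α i j = Qmat A α j i := by
  unfold Qmat
  rw [hG.symm i j, mul_comm (Real.sqrt (deg A i))]
  congr 1
  simp [eq_comm]

lemma Qdiag {n : ℕ} {A : Matrix (Fin n) (Fin n) ℝ} (hG : IsGraph A) (α : ℝ) (i : Fin n) :
    Qmat A α i i = (1 + α) / 2 := by
  simp [Qmat, hG.loopless i]

lemma Qoff_nonpos {n : ℕ} {A : Matrix (Fin n) (Fin n) ℝ} (hG : IsGraph A) {α : ℝ}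
    (hα1 : α ≤ 1) {i j : Fin n} (hij : i ≠ j) : Qmat A α i j ≤ 0 := by
  unfold Qmat
  rw [if_neg hij, zero_sub, neg_nonpos]
  have hA : 0 ≤ A i j := by rcases hG.zero_one i j with h | h <;> simp [h]
  have h1 : (0:ℝ) ≤ 1 - α := by linarith
  positivity

lemma mulVec_nonpos {n : ℕ} {A : Matrix (Fin n) (Fin n) ℝ} (hG : IsGraph A) {α : ℝ}
    (hα1 : α ≤ 1) {x : Fin n → ℝ} (hx : ∀ j, 0 ≤ x j) {i : Fin n} (hxi : x i = 0) :
    (Qmat A α).mulVec x i ≤ 0 := by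
  rw [Matrix.mulVec, dotProduct]
  apply Finset.sum_nonpos
  intro j _
  rcases eq_or_ne i j with rfl | hij
  · simp [hxi]
  · exact mul_nonpos_of_nonpos_of_nonneg (Qoff_nonpos hG hα1 hij) (hx j)

lemma mulVec_mono {n : ℕ} {A : Matrix (Fin n) (Fin n) ℝ} (hG : IsGraph A) {α : ℝ}
    (hα1 : α ≤ 1) {x y : Fin n → ℝ} (hxy : ∀ j, x j ≤ y j) {i : Fin n}
    (hxi : x i = 0) (hyi : y i = 0) :
    (Qmat A α).mulVec y i ≤ (Qmat A α).mulVec x i := by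
  rw [Matrix.mulVec, Matrix.mulVec, dotProduct, dotProduct]
  apply Finset.sum_le_sum
  intro j _
  rcases eq_or_ne i j with rfl | hij
  · simp [hxi, hyi]
  · exact mul_le_mul_of_nonpos_left (hxy j) (Qoff_nonpos hG hα1 hij)

lemma Freg_expand {n : ℕ} {A : Matrix (Fin n) (Fin n) ℝ} (hG : IsGraph A) (α ρ : ℝ)
    (v : Fin n) (x : Fin n → ℝ) (i : Fin n) (hxi : x i = 0) (t : ℝ) :
    Freg A α v ρ (fun j => x j + if j = i then t else 0)
      = Freg A α v ρ x + t * gradf A α v x i + t ^ 2 / 2 * Qmat A α i i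
        + α * ρ * Real.sqrt (deg A i) * |t| := by
  set Q := Qmat A α with hQ
  set z := fun j => x j + if j = i then t else 0 with hz
  have hmv : ∀ k, Q.mulVec z k = Q.mulVec x k + Q k i * t := by
    intro k
    simp only [Matrix.mulVec, dotProduct, hz, mul_add, Finset.sum_add_distrib,
      mul_ite, mul_zero, Finset.sum_ite_eq', Finset.mem_univ, if_true]
  have hsym : ∑ k, Q k i * x k = Q.mulVec x i := by
    rw [Matrix.mulVec, dotProduct]
    refine Finset.sum_congr rfl fun k _ => ?_
    show Qmat A α k i * x k = Qmat A α i k * x k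
    rw [Qsymm hG α k i]
  have hquad : ∑ k, z k * Q.mulVec z k
      = ∑ k, x k * Q.mulVec x k + 2 * t * Q.mulVec x i + t ^ 2 * Q i i := by
    have hpt : ∀ k, z k * Q.mulVec z k
        = x k * Q.mulVec x k + Q k i * x k * t
          + (if k = i then t * Q.mulVec x i + t ^ 2 * Q i i else 0) := by
      intro k
      rw [hmv k]
      rcases eq_or_ne k i with rfl | h
      · simp only [hz, hxi, if_pos rfl, zero_add, if_true]
        ring
      · simp only [hz, if_neg h, add_zero]
        ring
    simp only [hpt, Finset.sum_add_distrib, Finset.sum_ite_eq', Finset.mem_univ, if_true]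
    have : ∑ k, Q k i * x k * t = (∑ k, Q k i * x k) * t := by
      rw [Finset.sum_mul]
    rw [this, hsym]
    ring
  have hl1 : l1w A z = l1w A x + Real.sqrt (deg A i) * |t| := by
    unfold l1w
    have hpt : ∀ j, Real.sqrt (deg A j) * |z j|
        = Real.sqrt (deg A j) * |x j| + (if j = i then Real.sqrt (deg A i) * |t| else 0) := by
      intro j
      rcases eq_or_ne j i with rfl | h
      · simp [hz, hxi]
      · simp [hz, h]
    simp only [hpt, Finset.sum_add_distrib, Finset.sum_ite_eq', Finset.mem_univ, if_true]
  have hzv : z v = x v + if v = i then t else 0 := rfl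
  unfold Freg fPR gradf
  rw [hquad, hl1, hzv]
  rcases eq_or_ne i v with rfl | hiv
  · simp only [if_pos rfl, ↓reduceIte]
    have hd : Real.sqrt (deg A i) ≠ 0 := ne_of_gt (Real.sqrt_pos.mpr (hG.deg_pos i))
    field_simp
    ring
  · rw [if_neg (Ne.symm hiv), if_neg hiv]
    ring

lemma grad_lower {n : ℕ} {A : Matrix (Fin n) (Fin n) ℝ} (hG : IsGraph A) {α ρ : ℝ}
    (hα : 0 < α) (hρ : 0 ≤ ρ) {v : Fin n} {x : Fin n → ℝ}
    (hx : ∀ z, Freg A α v ρ x ≤ Freg A α v ρ z) {i : Fin n} (hxi : x i = 0) :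
    -(α * ρ * Real.sqrt (deg A i)) ≤ gradf A α v x i := by
  set g := gradf A α v x i with hg
  set c := α * ρ * Real.sqrt (deg A i) with hc
  have hQii : Qmat A α i i = (1 + α) / 2 := Qdiag hG α i
  have hQpos : 0 < Qmat A α i i := by rw [hQii]; linarith
  have key : ∀ t : ℝ, 0 < t → 0 ≤ g + t / 2 * Qmat A α i i + c := by
    intro t ht
    have h1 := hx (fun j => x j + if j = i then t else 0)
    rw [Freg_expand hG α ρ v x i hxi t, abs_of_pos ht] at h1
    have h2 : 0 ≤ t * g + t ^ 2 / 2 * Qmat A α i i + c * t := by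
      rw [hg, hc]; nlinarith [h1]
    have h3 : 0 ≤ t * (g + t / 2 * Qmat A α i i + c) := by nlinarith
    exact nonneg_of_mul_nonneg_right h3 ht
  have hall : ∀ ε : ℝ, 0 < ε → 0 ≤ g + c + ε := by
    intro ε hε
    have ht : 0 < 2 * ε / Qmat A α i i := by positivity
    have hkey := key _ ht
    have heq : 2 * ε / Qmat A α i i / 2 * Qmat A α i i = ε := by
      field_simp
    rw [heq] at hkey
    linarith
  have h0 : 0 ≤ g + c := by
    by_contra h
    push_neg at h
    have := hall (-(g + c) / 2) (by linarith)
    linarith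
  linarith

/-- If coordinate `i` is inactive at the problem-(A) minimizer
(`x_{A,i}⋆ = 0`), then `x_{B,i}⋆ = 0` as well, both gradients are nonpositive at `i`, and
`|∇_i f(x_B⋆)| ≤ |∇_i f(x_A⋆)| ≤ αρ√d_i`. -/
theorem inactive_gradient_comparison
    {n : ℕ} (A : Matrix (Fin n) (Fin n) ℝ) (hG : IsGraph A)
    (α ρ : ℝ) (hα : 0 < α) (hα1 : α ≤ 1) (hρ : 0 < ρ) (v : Fin n)
    (xA xB : Fin n → ℝ)
    (hxA : ∀ z, Freg A α v ρ xA ≤ Freg A α v ρ z)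
    (hxB : ∀ z, Freg A α v (2 * ρ) xB ≤ Freg A α v (2 * ρ) z)
    -- context facts: minimizers are nonnegative and the solution path is monotone
    (hAnn : ∀ j, 0 ≤ xA j) (hBnn : ∀ j, 0 ≤ xB j) (hmono : ∀ j, xB j ≤ xA j)
    (i : Fin n) (hiA : xA i = 0) :
    xB i = 0 ∧
    gradf A α v xA i ≤ 0 ∧
    gradf A α v xB i ≤ 0 ∧
    |gradf A α v xB i| ≤ |gradf A α v xA i| ∧
    |gradf A α v xA i| ≤ α * ρ * Real.sqrt (deg A i) := by
  have hBi : xB i = 0 := le_antisymm (hiA ▸ hmono i) (hBnn i)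
  have hseed : 0 ≤ α * (if i = v then 1 / Real.sqrt (deg A v) else 0) := by
    rcases eq_or_ne i v with rfl | h
    · simp only [if_pos rfl]
      positivity
    · simp [h]
  have hgA : gradf A α v xA i ≤ 0 := by
    unfold gradf
    have := mulVec_nonpos hG hα1 hAnn hiA
    linarith
  have hgB : gradf A α v xB i ≤ 0 := by
    unfold gradf
    have := mulVec_nonpos hG hα1 hBnn hBi
    linarith
  have hAB : gradf A α v xA i ≤ gradf A α v xB i := by
    unfold gradf
    have := mulVec_mono hG hα1 hmono hBi hiA
    linarith
  have hlbA : -(α * ρ * Real.sqrt (deg A i)) ≤ gradf A α v xA i :=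
    grad_lower hG hα (le_of_lt hρ) hxA hiA
  refine ⟨hBi, hgA, hgB, ?_, ?_⟩
  · rw [abs_of_nonpos hgB, abs_of_nonpos hgA]
    linarith
  · rw [abs_of_nonpos hgA]
    linarith
end
end
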